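/- arXiv:2604.27378 — 3 statements merged into one kernel-verified Lean document; each statement's English description precedes it below -/
import Mathlib

section
/- Let U be a p×p real symmetric negative definite matrix, γ > 0, and let a, b > 0 satisfy a ≥ (γ/2)‖U‖ and b ≥ 2a²/(γ·λ_min(−U)), where ‖U‖ is the spectral norm and λ_min(−U) the smallest eigenvalue of −U. Let Σ⁽⁰⁾ be a real symmetric matrix with aI_p ⪯ Σ⁽⁰⁾ ⪯ bI_p, and define recursively Σ⁽ˡ⁺¹⁾ = Σ⁽ˡ⁾ + a²(Σ⁽ˡ⁾)⁻¹ + (γ/2)U. Then for every l ≥ 0, Σ⁽ˡ⁾ is symmetric and satisfies aI_p ⪯ Σ⁽ˡ⁾ ⪯ bI_p. -/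
open Matrix
open scoped Matrix.Norms.L2Operator

namespace Stmt1Aux

variable {n : Type*} [Fintype n] [DecidableEq n]

lemma dot_self_eigen {A : Matrix n n ℝ} (hA : A.IsHermitian) (i : n) :
    star (⇑(hA.eigenvectorBasis i)) ⬝ᵥ ⇑(hA.eigenvectorBasis i) = 1 := by
  have h := hA.eigenvectorBasis.orthonormal.1 i
  have h2 : (inner ℝ (hA.eigenvectorBasis i) (hA.eigenvectorBasis i) : ℝ) = 1 := by
    rw [real_inner_self_eq_norm_sq, h]; norm_num
  rw [← h2, PiLp.inner_apply]
  simp [dotProduct, sq]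

lemma le_eig {A : Matrix n n ℝ} (hA : A.IsHermitian) {c : ℝ}
    (h : (A - c • (1 : Matrix n n ℝ)).PosSemidef) (i : n) : c ≤ hA.eigenvalues i := by
  have h2 := h.dotProduct_mulVec_nonneg (⇑(hA.eigenvectorBasis i))
  have hAv := hA.mulVec_eigenvectorBasis i
  rw [sub_mulVec, smul_mulVec, one_mulVec, hAv, dotProduct_sub] at h2
  simp only [dotProduct_smul, smul_eq_mul, dot_self_eigen hA i, mul_one] at h2
  linarith

lemma eig_le {A : Matrix n n ℝ} (hA : A.IsHermitian) {c : ℝ}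
    (h : (c • (1 : Matrix n n ℝ) - A).PosSemidef) (i : n) : hA.eigenvalues i ≤ c := by
  have h2 := h.dotProduct_mulVec_nonneg (⇑(hA.eigenvectorBasis i))
  have hAv := hA.mulVec_eigenvectorBasis i
  rw [sub_mulVec, smul_mulVec, one_mulVec, hAv, dotProduct_sub] at h2
  simp only [dotProduct_smul, smul_eq_mul, dot_self_eigen hA i, mul_one] at h2
  linarith

lemma abs_eig_le_norm {A : Matrix n n ℝ} (hA : A.IsHermitian) (i : n) :
    |hA.eigenvalues i| ≤ ‖A‖ := by
  have hv : ‖(hA.eigenvectorBasis i : EuclideanSpace ℝ n)‖ = 1 :=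
    hA.eigenvectorBasis.orthonormal.1 i
  have h := A.l2_opNorm_mulVec (hA.eigenvectorBasis i)
  rw [hv, mul_one] at h
  have h2 : ((EuclideanSpace.equiv n ℝ).symm (A *ᵥ (hA.eigenvectorBasis i : EuclideanSpace ℝ n)))
      = hA.eigenvalues i • hA.eigenvectorBasis i :=
    congrArg (EuclideanSpace.equiv n ℝ).symm (hA.mulVec_eigenvectorBasis i)
  have h3 : ‖(EuclideanSpace.equiv n ℝ).symm (A *ᵥ (hA.eigenvectorBasis i : EuclideanSpace ℝ n))‖
      = |hA.eigenvalues i| := by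
    rw [h2, norm_smul, hv, mul_one, Real.norm_eq_abs]
  rw [h3] at h
  exact h

lemma spectral_real {A : Matrix n n ℝ} (hA : A.IsHermitian) :
    A = (hA.eigenvectorUnitary : Matrix n n ℝ) * diagonal hA.eigenvalues
      * (star (hA.eigenvectorUnitary : Matrix n n ℝ)) := by
  have := hA.spectral_theorem
  simpa using this

lemma calculus {A : Matrix n n ℝ} (hA : A.IsHermitian)
    (hpos : ∀ i, 0 < hA.eigenvalues i) (c d e : ℝ)
    (h : ∀ i, 0 ≤ c + d * hA.eigenvalues i + e * (hA.eigenvalues i)⁻¹) :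
    (c • (1 : Matrix n n ℝ) + d • A + e • A⁻¹).PosSemidef := by
  set V : Matrix n n ℝ := (hA.eigenvectorUnitary : Matrix n n ℝ) with hV
  have hVsV : star V * V = 1 := Unitary.coe_star_mul_self hA.eigenvectorUnitary
  have hVVs : V * star V = 1 := Matrix.mem_unitaryGroup_iff.mp hA.eigenvectorUnitary.2
  have hspec : A = V * diagonal hA.eigenvalues * star V := spectral_real hA
  have hone : (V * diagonal hA.eigenvalues * star V) *
      (V * diagonal (fun i => (hA.eigenvalues i)⁻¹) * star V) = 1 := by
    have assoc : (V * diagonal hA.eigenvalues * star V) *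
        (V * diagonal (fun i => (hA.eigenvalues i)⁻¹) * star V)
        = V * (diagonal hA.eigenvalues * (star V * V) * diagonal (fun i => (hA.eigenvalues i)⁻¹)) * star V := by
      simp only [Matrix.mul_assoc]
    rw [assoc, hVsV, mul_one, diagonal_mul_diagonal]
    have : (fun i => hA.eigenvalues i * (hA.eigenvalues i)⁻¹) = fun _ : n => (1:ℝ) := by
      funext i; exact mul_inv_cancel₀ (hpos i).ne'
    rw [this, diagonal_one, Matrix.mul_one, hVVs]
  rw [← hspec] at hone
  have hinv : A⁻¹ = V * diagonal (fun i => (hA.eigenvalues i)⁻¹) * star V :=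
    inv_eq_right_inv hone
  have h1 : (diagonal (fun i => c + d * hA.eigenvalues i + e * (hA.eigenvalues i)⁻¹) : Matrix n n ℝ)
      = c • 1 + d • diagonal hA.eigenvalues + e • diagonal (fun i => (hA.eigenvalues i)⁻¹) := by
    rw [smul_one_eq_diagonal, ← diagonal_smul, ← diagonal_smul, ← diagonal_add, ← diagonal_add]
    rfl
  have e1 : ∀ (M : Matrix n n ℝ) (r : ℝ), V * (r • M) * star V = r • (V * M * star V) := by
    intro M r; rw [Matrix.mul_smul, Matrix.smul_mul]
  have key : c • (1 : Matrix n n ℝ) + d • A + e • A⁻¹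
      = V * diagonal (fun i => c + d * hA.eigenvalues i + e * (hA.eigenvalues i)⁻¹) * star V := by
    rw [h1]
    simp only [Matrix.mul_add, Matrix.add_mul]
    rw [e1, e1, e1, Matrix.mul_one, hVVs, ← hspec, ← hinv]
  rw [key, Matrix.star_eq_conjTranspose]
  exact (posSemidef_diagonal_iff.mpr h).mul_mul_conjTranspose_same V

lemma herm_smul {A : Matrix n n ℝ} (h : A.IsHermitian) (r : ℝ) : (r • A).IsHermitian := by
  rw [Matrix.IsHermitian, conjTranspose_smul, star_trivial, h.eq]

end Stmt1Aux

/-- Let `U` be a real symmetric negative definite `p × p` matrix (i.e. `-U`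
is positive definite), `γ > 0`, and `a, b > 0` with `a ≥ (γ/2)‖U‖` (`‖·‖` the spectral /
L2-operator norm) and `b ≥ 2a²/(γ λ_min(-U))`, where `λ_min(-U) = ⨅ i, eigenvalues i` is the
smallest eigenvalue of `-U`.  If `Sig 0` is symmetric with `a•I ⪯ Sig 0 ⪯ b•I` and
`Sig (l+1) = Sig l + a²•(Sig l)⁻¹ + (γ/2)•U`, then every `Sig l` is symmetric and satisfies
`a•I ⪯ Sig l ⪯ b•I`. -/
theorem stmt1 {p : ℕ} (γ a b : ℝ) (hγ : 0 < γ) (ha : 0 < a) (hb : 0 < b)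
    (U : Matrix (Fin p) (Fin p) ℝ) (hU : (-U).PosDef)
    (hna : γ / 2 * ‖U‖ ≤ a)
    (hnb : 2 * a ^ 2 / (γ * ⨅ i, hU.1.eigenvalues i) ≤ b)
    (Sig : ℕ → Matrix (Fin p) (Fin p) ℝ)
    (hsym0 : (Sig 0).IsSymm)
    (h0a : (Sig 0 - a • (1 : Matrix (Fin p) (Fin p) ℝ)).PosSemidef)
    (h0b : (b • (1 : Matrix (Fin p) (Fin p) ℝ) - Sig 0).PosSemidef)
    (hrec : ∀ l : ℕ, Sig (l + 1) = Sig l + a ^ 2 • (Sig l)⁻¹ + (γ / 2) • U) :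
    ∀ l : ℕ, (Sig l).IsSymm ∧
      (Sig l - a • (1 : Matrix (Fin p) (Fin p) ℝ)).PosSemidef ∧
      (b • (1 : Matrix (Fin p) (Fin p) ℝ) - Sig l).PosSemidef := by
  -- eigenvalues of -U
  set evU := hU.1.eigenvalues with hevU
  have hevU_pos : ∀ i, 0 < evU i := hU.eigenvalues_pos
  have hevU_le : ∀ i, evU i ≤ ‖U‖ := by
    intro i
    have := Stmt1Aux.abs_eig_le_norm hU.1 i
    rw [norm_neg] at this
    exact le_trans (le_abs_self _) this
  have hmu : ∀ _i : Fin p, a ^ 2 / b ≤ γ / 2 * ⨅ j, evU j := by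
    intro i
    haveI : Nonempty (Fin p) := ⟨i⟩
    obtain ⟨j, hj⟩ := exists_eq_ciInf_of_finite (f := evU)
    have hμpos : 0 < ⨅ j, evU j := hj ▸ hevU_pos j
    have h2 : 2 * a ^ 2 ≤ b * (γ * ⨅ j, evU j) := by
      rw [div_le_iff₀ (by positivity)] at hnb
      linarith
    rw [div_le_iff₀ hb]
    nlinarith
  have hmu_le : ∀ i : Fin p, (⨅ j, evU j) ≤ evU i := by
    intro i
    haveI : Nonempty (Fin p) := ⟨i⟩
    exact ciInf_le (Finite.bddBelow_range _) i
  have hab : ∀ _i : Fin p, a ^ 2 / b ≤ a := by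
    intro i
    refine le_trans (hmu i) ?_
    have := hmu_le i
    have := hevU_le i
    have := hevU_pos i
    nlinarith
  have hUherm : U.IsHermitian := by simpa using hU.1.neg
  -- the two U-side PSD matrices
  have hF1 : (a • (1 : Matrix (Fin p) (Fin p) ℝ) + (γ / 2) • U).PosSemidef := by
    have := Stmt1Aux.calculus hU.1 hevU_pos a (-(γ / 2)) 0 (by
      intro i
      have h1 := hevU_le i
      nlinarith)
    have heq : a • (1 : Matrix (Fin p) (Fin p) ℝ) + (-(γ / 2)) • (-U) + (0:ℝ) • (-U)⁻¹
        = a • (1 : Matrix (Fin p) (Fin p) ℝ) + (γ / 2) • U := by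
      rw [zero_smul, add_zero, neg_smul, smul_neg, neg_neg]
    rwa [heq] at this
  have hF2 : ((-(a ^ 2 / b)) • (1 : Matrix (Fin p) (Fin p) ℝ) + (γ / 2) • (-U)).PosSemidef := by
    have := Stmt1Aux.calculus hU.1 hevU_pos (-(a ^ 2 / b)) (γ / 2) 0 (by
      intro i
      have h1 := hmu_le i
      have h2 := hmu i
      nlinarith)
    have heq : (-(a ^ 2 / b)) • (1 : Matrix (Fin p) (Fin p) ℝ) + (γ / 2) • (-U) + (0:ℝ) • (-U)⁻¹
        = (-(a ^ 2 / b)) • (1 : Matrix (Fin p) (Fin p) ℝ) + (γ / 2) • (-U) := by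
      rw [zero_smul, add_zero]
    rwa [heq] at this
  -- induction
  have main : ∀ l : ℕ, (Sig l).IsHermitian ∧
      (Sig l - a • (1 : Matrix (Fin p) (Fin p) ℝ)).PosSemidef ∧
      (b • (1 : Matrix (Fin p) (Fin p) ℝ) - Sig l).PosSemidef := by
    intro l
    induction l with
    | zero =>
      refine ⟨?_, h0a, h0b⟩
      rw [Matrix.IsHermitian, conjTranspose_eq_transpose_of_trivial]
      exact hsym0
    | succ l ih =>
      obtain ⟨hs, hla, hlb⟩ := ih
      set S := Sig l with hS
      have heva : ∀ i, a ≤ hs.eigenvalues i := Stmt1Aux.le_eig hs hla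
      have hevb : ∀ i, hs.eigenvalues i ≤ b := Stmt1Aux.eig_le hs hlb
      have hpos : ∀ i, 0 < hs.eigenvalues i := fun i => lt_of_lt_of_le ha (heva i)
      have hE1 : ((-(2 * a)) • (1 : Matrix (Fin p) (Fin p) ℝ) + (1:ℝ) • S + (a ^ 2) • S⁻¹).PosSemidef := by
        refine Stmt1Aux.calculus hs hpos _ _ _ (fun i => ?_)
        have hx := hpos i
        have h1 : 0 ≤ (hs.eigenvalues i - a) ^ 2 * (hs.eigenvalues i)⁻¹ :=
          mul_nonneg (sq_nonneg _) (inv_nonneg.2 hx.le)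
        have h2 : hs.eigenvalues i * (hs.eigenvalues i)⁻¹ = 1 := mul_inv_cancel₀ hx.ne'
        nlinarith
      have hE2 : ((b + a ^ 2 / b) • (1 : Matrix (Fin p) (Fin p) ℝ) + (-1 : ℝ) • S + (-(a ^ 2)) • S⁻¹).PosSemidef := by
        refine Stmt1Aux.calculus hs hpos _ _ _ (fun i => ?_)
        have hx := hpos i
        have hxa := heva i
        have hxb := hevb i
        have h1 : 0 ≤ (b - hs.eigenvalues i) * (hs.eigenvalues i - a ^ 2 / b) * (hs.eigenvalues i)⁻¹ := by
          have hc : a ^ 2 / b ≤ a := hab i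
          apply mul_nonneg (mul_nonneg (by linarith) (by linarith)) (inv_nonneg.2 hx.le)
        have h5 : (b - hs.eigenvalues i) * (hs.eigenvalues i - a ^ 2 / b) * (hs.eigenvalues i)⁻¹
            = b + a ^ 2 / b - hs.eigenvalues i - a ^ 2 * (hs.eigenvalues i)⁻¹ := by
          field_simp
          ring
        rw [h5] at h1
        linarith
      have hsherm : (Sig (l + 1)).IsHermitian := by
        rw [hrec l]
        exact (hs.add (Stmt1Aux.herm_smul hs.inv (a ^ 2))).add (Stmt1Aux.herm_smul hUherm (γ / 2))
      refine ⟨hsherm, ?_, ?_⟩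
      · have heq : Sig (l + 1) - a • (1 : Matrix (Fin p) (Fin p) ℝ)
            = ((-(2 * a)) • (1 : Matrix (Fin p) (Fin p) ℝ) + (1:ℝ) • S + (a ^ 2) • S⁻¹)
              + (a • (1 : Matrix (Fin p) (Fin p) ℝ) + (γ / 2) • U) := by
          rw [hrec l]
          module
        rw [heq]
        exact hE1.add hF1
      · have heq : b • (1 : Matrix (Fin p) (Fin p) ℝ) - Sig (l + 1)
            = ((b + a ^ 2 / b) • (1 : Matrix (Fin p) (Fin p) ℝ) + (-1 : ℝ) • S + (-(a ^ 2)) • S⁻¹)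
              + ((-(a ^ 2 / b)) • (1 : Matrix (Fin p) (Fin p) ℝ) + (γ / 2) • (-U)) := by
          rw [hrec l]
          module
        rw [heq]
        exact hE2.add hF2
  intro l
  obtain ⟨h1, h2, h3⟩ := main l
  refine ⟨?_, h2, h3⟩
  rw [Matrix.IsSymm, ← conjTranspose_eq_transpose_of_trivial]
  exact h1
end

section
/- Let 0 < a ≤ b and let Σ, Σ′ be p×p real symmetric matrices with aI_p ⪯ Σ ⪯ bI_p and aI_p ⪯ Σ′ ⪯ bI_p. Then Tr((Σ′⁻¹ − Σ⁻¹)(Σ′ − Σ)) ≤ −(1/b²)·‖Σ′ − Σ‖_F². -/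
open Matrix

section Helpers

variable {n : Type*} [Fintype n] [DecidableEq n]

open scoped MatrixOrder

lemma myTraceNonneg {M : Matrix n n ℝ} (hM : M.PosSemidef) : 0 ≤ M.trace := by
  rw [Matrix.trace]
  apply Finset.sum_nonneg
  intro i _
  have h := hM.dotProduct_mulVec_nonneg (Pi.single i 1)
  simpa [Matrix.diag, dotProduct, Matrix.mulVec, Pi.single_apply,
    Finset.sum_ite_eq, Finset.sum_ite_eq'] using h

lemma myTraceMulNonneg {A B : Matrix n n ℝ} (hA : A.PosSemidef) (hB : B.PosSemidef) :
    0 ≤ (A * B).trace := by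
  have hR : CFC.sqrt A * CFC.sqrt A = A := CFC.sqrt_mul_sqrt_self A hA.nonneg
  have hRH : (CFC.sqrt A)ᴴ = CFC.sqrt A := (Matrix.nonneg_iff_posSemidef.mp (CFC.sqrt_nonneg A)).1
  have h1 : ((CFC.sqrt A)ᴴ * B * CFC.sqrt A).trace = (A * B).trace := by
    rw [hRH, Matrix.trace_mul_cycle, hR]
  rw [← h1]
  exact myTraceNonneg (hB.conjTranspose_mul_mul_same (CFC.sqrt A))

lemma mySmulPosSemidef {c : ℝ} (hc : 0 ≤ c) {M : Matrix n n ℝ} (hM : M.PosSemidef) :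
    (c • M).PosSemidef := by
  refine Matrix.PosSemidef.of_dotProduct_mulVec_nonneg ?_ (fun x => ?_)
  · unfold Matrix.IsHermitian
    rw [conjTranspose_smul, hM.1]
    simp
  · rw [smul_mulVec, dotProduct_smul]
    exact mul_nonneg hc (hM.dotProduct_mulVec_nonneg x)

/-- If `0 ≺ S` and `S ⪯ b•1` then `b⁻¹•1 ⪯ S⁻¹`. -/
lemma myInvLoewner {b : ℝ} (hb : 0 < b) {S : Matrix n n ℝ} (hSpd : S.PosDef)
    (h2 : (b • (1 : Matrix n n ℝ) - S).PosSemidef) :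
    (S⁻¹ - b⁻¹ • (1 : Matrix n n ℝ)).PosSemidef := by
  have hunit : IsUnit S.det := hSpd.det_pos.ne'.isUnit
  have hSi : S⁻¹ * S = 1 := Matrix.nonsing_inv_mul S hunit
  have hiS : S * S⁻¹ = 1 := Matrix.mul_nonsing_inv S hunit
  set R := CFC.sqrt S with hRdef
  have hR : R * R = S := CFC.sqrt_mul_sqrt_self S hSpd.posSemidef.nonneg
  have hRH : Rᴴ = R := (Matrix.nonneg_iff_posSemidef.mp (CFC.sqrt_nonneg S)).1
  -- b•S - S*S is PSD
  have hM : (b • S - S * S).PosSemidef := by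
    have h := h2.conjTranspose_mul_mul_same R
    rw [hRH] at h
    have : R * (b • (1 : Matrix n n ℝ) - S) * R = b • S - S * S := by
      rw [mul_sub, sub_mul, mul_smul_comm, mul_one, smul_mul_assoc, hR]
      congr 1
      calc R * S * R = R * (R * R) * R := by rw [hR]
        _ = (R * R) * (R * R) := by noncomm_ring
        _ = S * S := by rw [hR]
    rwa [this] at h
  -- conjugate by S⁻¹
  have hinvH : S⁻¹ᴴ = S⁻¹ := hSpd.inv.1
  have h := hM.conjTranspose_mul_mul_same S⁻¹
  rw [hinvH] at h
  have heq : S⁻¹ * (b • S - S * S) * S⁻¹ = b • S⁻¹ - 1 := by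
    rw [mul_sub, sub_mul, mul_smul_comm, smul_mul_assoc]
    rw [mul_assoc S⁻¹ S S⁻¹, hiS, mul_one]
    congr 1
    calc S⁻¹ * (S * S) * S⁻¹ = (S⁻¹ * S) * (S * S⁻¹) := by noncomm_ring
      _ = 1 := by rw [hSi, hiS, one_mul]
  rw [heq] at h
  have := mySmulPosSemidef (le_of_lt (inv_pos.mpr hb)) h
  have hfin : b⁻¹ • (b • S⁻¹ - 1) = S⁻¹ - b⁻¹ • (1 : Matrix n n ℝ) := by
    rw [smul_sub, smul_smul, inv_mul_cancel₀ hb.ne', one_smul]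
  rwa [hfin] at this

end Helpers

/-- Let `0 < a ≤ b` and let `S, S'` be `p × p` real symmetric matrices with
`a•I ⪯ S ⪯ b•I` and `a•I ⪯ S' ⪯ b•I` (Loewner order). Then
`Tr((S'⁻¹ - S⁻¹)(S' - S)) ≤ -(1/b²) ‖S' - S‖_F²`, where `‖M‖_F² = Tr(Mᵀ M)`. -/
theorem stmt3 {p : ℕ} (a b : ℝ) (ha : 0 < a) (hab : a ≤ b)
    (S S' : Matrix (Fin p) (Fin p) ℝ) (hS : S.IsSymm) (hS' : S'.IsSymm)
    (h1 : (S - a • (1 : Matrix (Fin p) (Fin p) ℝ)).PosSemidef)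
    (h2 : (b • (1 : Matrix (Fin p) (Fin p) ℝ) - S).PosSemidef)
    (h3 : (S' - a • (1 : Matrix (Fin p) (Fin p) ℝ)).PosSemidef)
    (h4 : (b • (1 : Matrix (Fin p) (Fin p) ℝ) - S').PosSemidef) :
    ((S'⁻¹ - S⁻¹) * (S' - S)).trace ≤ -(1 / b ^ 2) * ((S' - S)ᵀ * (S' - S)).trace := by
  have hb : 0 < b := lt_of_lt_of_le ha hab
  have haI : (a • (1 : Matrix (Fin p) (Fin p) ℝ)).PosDef := by
    refine Matrix.PosDef.of_dotProduct_mulVec_pos ?_ (fun x hx => ?_)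
    · unfold Matrix.IsHermitian
      rw [conjTranspose_smul, conjTranspose_one]
      simp
    · rw [smul_mulVec, one_mulVec, dotProduct_smul]
      exact mul_pos ha (Matrix.dotProduct_star_self_pos_iff.mpr hx)
  have hSpd : S.PosDef := by
    have := Matrix.PosDef.posSemidef_add h1 haI
    rwa [sub_add_cancel] at this
  have hS'pd : S'.PosDef := by
    have := Matrix.PosDef.posSemidef_add h3 haI
    rwa [sub_add_cancel] at this
  have hSi : S⁻¹ * S = 1 := Matrix.nonsing_inv_mul S (hSpd.det_pos.ne'.isUnit)
  have hiS : S * S⁻¹ = 1 := Matrix.mul_nonsing_inv S (hSpd.det_pos.ne'.isUnit)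
  have hS'i : S'⁻¹ * S' = 1 := Matrix.nonsing_inv_mul S' (hS'pd.det_pos.ne'.isUnit)
  set D := S' - S with hDdef
  have hD : Dᴴ = D := by
    have := (hS'pd.1.sub hSpd.1)
    exact this
  have hDT : Dᵀ = D := by
    have := hD
    rwa [Matrix.conjTranspose_eq_transpose_of_trivial] at this
  -- Key identity: S'⁻¹ * D * S⁻¹ = S⁻¹ - S'⁻¹
  have key : S'⁻¹ * D * S⁻¹ = S⁻¹ - S'⁻¹ := by
    rw [hDdef, mul_sub, hS'i, sub_mul, one_mul, mul_assoc, hiS, mul_one]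
  -- Loewner bounds on inverses
  have hP : (S⁻¹ - b⁻¹ • (1 : Matrix (Fin p) (Fin p) ℝ)).PosSemidef := myInvLoewner hb hSpd h2
  have hQ : (S'⁻¹ - b⁻¹ • (1 : Matrix (Fin p) (Fin p) ℝ)).PosSemidef := myInvLoewner hb hS'pd h4
  set P := S⁻¹ - b⁻¹ • (1 : Matrix (Fin p) (Fin p) ℝ) with hPdef
  set Q := S'⁻¹ - b⁻¹ • (1 : Matrix (Fin p) (Fin p) ℝ) with hQdef
  have hPrw : S⁻¹ = b⁻¹ • (1 : Matrix (Fin p) (Fin p) ℝ) + P := by rw [hPdef]; abel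
  have hQrw : S'⁻¹ = b⁻¹ • (1 : Matrix (Fin p) (Fin p) ℝ) + Q := by rw [hQdef]; abel
  -- PSD of D*D and D*P*D
  have hDD : (D * D).PosSemidef := by
    have := Matrix.posSemidef_conjTranspose_mul_self D
    rwa [hD] at this
  have hDPD : (Dᴴ * P * D).PosSemidef := hP.conjTranspose_mul_mul_same D
  -- bound: trace (D * S⁻¹ * D) ≥ b⁻¹ * trace (D*D)
  have step1 : b⁻¹ * (D * D).trace ≤ (S⁻¹ * (D * D)).trace := by
    rw [hPrw, add_mul, Matrix.trace_add, smul_mul_assoc, one_mul, Matrix.trace_smul]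
    have := myTraceMulNonneg hP hDD
    simp only [smul_eq_mul]
    linarith
  -- bound: trace (S'⁻¹ * D * S⁻¹ * D) ≥ b⁻² * trace (D*D)
  have step2 : b⁻¹ * b⁻¹ * (D * D).trace ≤ (S'⁻¹ * D * S⁻¹ * D).trace := by
    have hassoc : S'⁻¹ * D * S⁻¹ * D = S'⁻¹ * (D * S⁻¹ * D) := by noncomm_ring
    rw [hassoc, hQrw, add_mul, Matrix.trace_add, smul_mul_assoc, one_mul, Matrix.trace_smul]
    have hcyc : (D * S⁻¹ * D).trace = (S⁻¹ * (D * D)).trace := by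
      rw [Matrix.trace_mul_cycle, Matrix.trace_mul_comm]
    have hDSD : (D * S⁻¹ * D).PosSemidef := by
      have := (hSpd.inv.posSemidef).conjTranspose_mul_mul_same D
      rwa [hD] at this
    have hq : 0 ≤ (Q * (D * S⁻¹ * D)).trace := myTraceMulNonneg hQ hDSD
    simp only [smul_eq_mul]
    have h1' := step1
    rw [← hcyc] at h1'
    nlinarith [inv_pos.mpr hb]
  -- finish
  have lhs_eq : ((S'⁻¹ - S⁻¹) * D).trace = -(S'⁻¹ * D * S⁻¹ * D).trace := by
    have : S'⁻¹ - S⁻¹ = -(S'⁻¹ * D * S⁻¹) := by rw [key]; abel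
    rw [this, neg_mul, Matrix.trace_neg]
  rw [lhs_eq, hDT]
  have hb2 : (1 : ℝ) / b ^ 2 = b⁻¹ * b⁻¹ := by
    field_simp
  rw [hb2]
  linarith [step2]
end

section
/- Let p, d be positive integers, γ > 0. Let U, V be p×p real symmetric negative definite matrices, S, Z ∈ ℝ^{p×d}, Λ, Γ d×d real symmetric matrices, C₁, C₂ d×d real symmetric positive definite matrices, and χ ∈ ℝ. Define, for K, K̄ ∈ ℝ^{p×d} and Σ a p×p real symmetric positive definite matrix, f(K, K̄, Σ) = Tr((Λ + SᵀK + KᵀS + KᵀUK)C₁) + Tr((Γ + ZᵀK̄ + K̄ᵀZ + K̄ᵀVK̄)C₂) + χ + (γ/2)·log det Σ + Tr(UΣ). Then f is concave on its (convex) domain, and (K*, K̄*, Σ*) = (−U⁻¹S, −V⁻¹Z, −(γ/2)U⁻¹) is its unique global maximizer: f(K, K̄, Σ) ≤ f(K*, K̄*, Σ*) for all admissible (K, K̄, Σ), with equality if and only if (K, K̄, Σ) = (K*, K̄*, Σ*). -/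
open Matrix

variable {n m : Type*} [Fintype n] [Fintype m] [DecidableEq n] [DecidableEq m]

lemma herm_transpose {A : Matrix n n ℝ} (h : A.IsHermitian) : Aᵀ = A := by
  rw [← conjTranspose_eq_transpose_of_trivial]; exact h

lemma posDef_smul {c : ℝ} (hc : 0 < c) {A : Matrix n n ℝ} (hA : A.PosDef) : (c • A).PosDef := by
  refine Matrix.posDef_iff_dotProduct_mulVec.mpr ⟨?_, fun x hx => ?_⟩
  · unfold Matrix.IsHermitian
    rw [conjTranspose_smul, hA.1]
    simp
  · rw [smul_mulVec, dotProduct_smul]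
    exact mul_pos hc (by simpa using hA.dotProduct_mulVec_pos hx)

lemma trace_conj_nonneg {P : Matrix n n ℝ} (hP : P.PosDef) (N : Matrix n m ℝ) :
    0 ≤ (Nᵀ * P * N).trace ∧ ((Nᵀ * P * N).trace = 0 ↔ N = 0) := by
  have key : (Nᵀ * P * N).trace = ∑ j, dotProduct (fun i => N i j) (P *ᵥ fun i => N i j) := by
    simp only [Matrix.trace, Matrix.mul_apply, dotProduct, Matrix.mulVec, Matrix.diag,
      Finset.mul_sum, Finset.sum_mul]
    refine Finset.sum_congr rfl fun j _ => ?_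
    rw [Finset.sum_comm]
    exact Finset.sum_congr rfl fun a _ => Finset.sum_congr rfl fun b _ => by rw [Matrix.transpose_apply]; ring
  have hnn : ∀ j (_ : j ∈ (Finset.univ : Finset m)),
      0 ≤ dotProduct (fun i => N i j) (P *ᵥ fun i => N i j) := by
    intro j _
    simpa using hP.posSemidef.dotProduct_mulVec_nonneg (fun i => N i j)
  constructor
  · rw [key]; exact Finset.sum_nonneg hnn
  · rw [key]
    constructor
    · intro h
      ext i j
      by_contra hij
      have hcol : (fun i => N i j) ≠ 0 := by
        intro h0; exact hij (by simpa using congrFun h0 i)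
      have hpos := hP.dotProduct_mulVec_pos hcol
      simp only [star_trivial] at hpos
      have h0 := (Finset.sum_eq_zero_iff_of_nonneg hnn).mp h j (Finset.mem_univ j)
      exact absurd h0 hpos.ne'
    · intro h; simp [h]

lemma logdet_le_trace {M : Matrix n n ℝ} (hM : M.PosDef) :
    Real.log M.det ≤ M.trace - Fintype.card n ∧
    (Real.log M.det = M.trace - Fintype.card n ↔ M = 1) := by
  classical
  have hH := hM.1
  have hpos : ∀ i, 0 < hH.eigenvalues i := fun i => hM.eigenvalues_pos i
  have hdet : M.det = ∏ i, hH.eigenvalues i := by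
    simpa using hH.det_eq_prod_eigenvalues
  have hV : (star (hH.eigenvectorUnitary : Matrix n n ℝ)) *
      (hH.eigenvectorUnitary : Matrix n n ℝ) = 1 :=
    mem_unitaryGroup_iff'.mp (hH.eigenvectorUnitary).2
  have htr : M.trace = ∑ i, hH.eigenvalues i := by
    conv_lhs => rw [hH.spectral_theorem, Unitary.conjStarAlgAut_apply]
    rw [Matrix.trace_mul_comm, ← Matrix.mul_assoc, hV, Matrix.one_mul]
    simp [Matrix.trace_diagonal]
  have hlog : Real.log M.det = ∑ i, Real.log (hH.eigenvalues i) := by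
    rw [hdet, Real.log_prod]
    exact fun i _ => (hpos i).ne'
  have hle : ∀ i ∈ (Finset.univ : Finset n),
      Real.log (hH.eigenvalues i) ≤ hH.eigenvalues i - 1 :=
    fun i _ => Real.log_le_sub_one_of_pos (hpos i)
  have hsum1 : ∑ i : n, (hH.eigenvalues i - 1) = M.trace - Fintype.card n := by
    rw [htr]; simp [Finset.sum_sub_distrib]
  constructor
  · rw [hlog, ← hsum1]; exact Finset.sum_le_sum hle
  constructor
  · intro h
    have heq : ∀ i ∈ (Finset.univ : Finset n),
        Real.log (hH.eigenvalues i) = hH.eigenvalues i - 1 := by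
      apply (Finset.sum_eq_sum_iff_of_le hle).mp
      rw [← hlog, h, ← hsum1]
    have hev1 : ∀ i, hH.eigenvalues i = 1 := by
      intro i
      by_contra hne
      exact absurd (heq i (Finset.mem_univ i))
        (Real.log_lt_sub_one_of_pos (hpos i) hne).ne
    have hdiag : Matrix.diagonal (RCLike.ofReal ∘ hH.eigenvalues) = (1 : Matrix n n ℝ) := by
      have : (RCLike.ofReal ∘ hH.eigenvalues : n → ℝ) = fun _ => 1 :=
        funext fun i => by simp [hev1 i]
      rw [this]
      exact Matrix.diagonal_one
    conv_lhs => rw [hH.spectral_theorem, Unitary.conjStarAlgAut_apply]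
    rw [hdiag, Matrix.mul_one, mem_unitaryGroup_iff.mp (hH.eigenvectorUnitary).2]
  · intro h; subst h; simp

lemma posDef_conj {X B : Matrix n n ℝ} (hX : X.PosDef) (hB : IsUnit B.det) :
    (Bᵀ * X * B).PosDef := by
  refine Matrix.posDef_iff_dotProduct_mulVec.mpr ⟨?_, fun x hx => ?_⟩
  · have hXt := herm_transpose hX.1
    unfold Matrix.IsHermitian
    rw [conjTranspose_eq_transpose_of_trivial]
    rw [Matrix.transpose_mul, Matrix.transpose_mul, Matrix.transpose_transpose, hXt,
      ← Matrix.mul_assoc]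
  · have hkey : dotProduct (star x) ((Bᵀ * X * B) *ᵥ x)
        = dotProduct (star (B *ᵥ x)) (X *ᵥ (B *ᵥ x)) := by
      simp only [star_trivial]
      rw [← Matrix.mulVec_mulVec, ← Matrix.mulVec_mulVec, Matrix.dotProduct_mulVec,
        Matrix.vecMul_transpose]
    rw [hkey]
    apply hX.dotProduct_mulVec_pos
    intro h0
    apply hx
    have : B⁻¹ *ᵥ (B *ᵥ x) = x := by
      rw [Matrix.mulVec_mulVec, Matrix.nonsing_inv_mul _ hB, Matrix.one_mulVec]
    rw [h0] at this
    rw [← this, Matrix.mulVec_zero]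

lemma logdet_tangent {X Y : Matrix n n ℝ} (hX : X.PosDef) (hY : Y.PosDef) :
    Real.log X.det ≤ Real.log Y.det + (Y⁻¹ * X).trace - Fintype.card n ∧
    (Real.log X.det = Real.log Y.det + (Y⁻¹ * X).trace - Fintype.card n ↔ X = Y) := by
  classical
  obtain ⟨R, hRR, hRsym⟩ : ∃ R : Matrix n n ℝ, R * R = Y ∧ Rᵀ = R := by
    open scoped MatrixOrder in
    exact ⟨CFC.sqrt Y, CFC.sqrt_mul_sqrt_self Y hY.posSemidef.nonneg,
      herm_transpose (CFC.sqrt_nonneg Y).posSemidef.1⟩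
  have hdetY : 0 < Y.det := hY.det_pos
  have hdetX : 0 < X.det := hX.det_pos
  have hdetR : R.det ≠ 0 := by
    intro h
    rw [← hRR, Matrix.det_mul, h, mul_zero] at hdetY
    exact lt_irrefl _ hdetY
  have hRu : IsUnit R.det := isUnit_iff_ne_zero.mpr hdetR
  have hRiu : IsUnit (R⁻¹).det := R.isUnit_nonsing_inv_det hRu
  set M := R⁻¹ * X * R⁻¹ with hMdef
  have hRisym : (R⁻¹)ᵀ = R⁻¹ := by rw [Matrix.transpose_nonsing_inv, hRsym]
  have hM : M.PosDef := by
    have := posDef_conj hX hRiu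
    rwa [hRisym] at this
  have hMtr : M.trace = (Y⁻¹ * X).trace := by
    rw [hMdef, Matrix.trace_mul_cycle, ← Matrix.mul_inv_rev, hRR]
  have hMdet : M.det = X.det / Y.det := by
    have h1 : (R⁻¹).det * (R⁻¹).det = (Y.det)⁻¹ := by
      rw [← Matrix.det_mul, ← Matrix.mul_inv_rev, hRR, Matrix.det_nonsing_inv,
        Ring.inverse_eq_inv]
    rw [hMdef, Matrix.det_mul, Matrix.det_mul, div_eq_mul_inv, ← h1]
    ring
  have hMlog : Real.log M.det = Real.log X.det - Real.log Y.det := by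
    rw [hMdet, Real.log_div hdetX.ne' hdetY.ne']
  have hiff : M = 1 ↔ X = Y := by
    constructor
    · intro h
      have : R * M * R = R * 1 * R := by rw [h]
      rw [hMdef, Matrix.mul_one, hRR] at this
      calc X = (R * R⁻¹) * X * (R⁻¹ * R) := by
              rw [Matrix.mul_nonsing_inv _ hRu, Matrix.nonsing_inv_mul _ hRu,
                Matrix.one_mul, Matrix.mul_one]
        _ = R * (R⁻¹ * X * R⁻¹) * R := by simp only [Matrix.mul_assoc]
        _ = Y := by rw [← hMdef]; exact this
    · intro h
      rw [hMdef, h, ← hRR]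
      simp only [← Matrix.mul_assoc]
      rw [Matrix.nonsing_inv_mul _ hRu, Matrix.one_mul, Matrix.mul_nonsing_inv _ hRu]
  obtain ⟨hle, heq⟩ := logdet_le_trace hM
  rw [hMlog, hMtr] at hle heq
  constructor
  · linarith
  · rw [← hiff, ← heq]
    constructor <;> intro h <;> linarith

lemma trace_quad_pos {p d : ℕ} {P : Matrix (Fin p) (Fin p) ℝ} (hP : P.PosDef)
    {C : Matrix (Fin d) (Fin d) ℝ} (hC : C.PosDef) (M : Matrix (Fin p) (Fin d) ℝ) :
    0 ≤ (Mᵀ * P * M * C).trace ∧ ((Mᵀ * P * M * C).trace = 0 ↔ M = 0) := by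
  classical
  obtain ⟨R, hRR, hRsym⟩ : ∃ R : Matrix (Fin d) (Fin d) ℝ, R * R = C ∧ Rᵀ = R := by
    open scoped MatrixOrder in
    exact ⟨CFC.sqrt C, CFC.sqrt_mul_sqrt_self C hC.posSemidef.nonneg,
      herm_transpose (CFC.sqrt_nonneg C).posSemidef.1⟩
  have hdetR : IsUnit R.det := by
    refine isUnit_iff_ne_zero.mpr fun h => ?_
    have := hC.det_pos
    rw [← hRR, Matrix.det_mul, h, mul_zero] at this
    exact lt_irrefl _ this
  have key : (Mᵀ * P * M * C).trace = ((M * R)ᵀ * P * (M * R)).trace := by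
    rw [← hRR, ← Matrix.mul_assoc, Matrix.trace_mul_comm, Matrix.transpose_mul, hRsym]
    simp only [Matrix.mul_assoc]
  obtain ⟨h1, h2⟩ := trace_conj_nonneg hP (M * R)
  rw [key]
  refine ⟨h1, h2.trans ⟨fun h => ?_, fun h => by rw [h, Matrix.zero_mul]⟩⟩
  calc M = M * R * R⁻¹ := by rw [Matrix.mul_assoc, Matrix.mul_nonsing_inv _ hdetR, Matrix.mul_one]
    _ = 0 := by rw [h, Matrix.zero_mul]

lemma phi_expand {p d : ℕ} (U : Matrix (Fin p) (Fin p) ℝ) (S : Matrix (Fin p) (Fin d) ℝ)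
    (Λ C : Matrix (Fin d) (Fin d) ℝ) (K₀ D : Matrix (Fin p) (Fin d) ℝ)
    (h1 : K₀ᵀ * U = -Sᵀ) (h2 : U * K₀ = -S) :
    ((Λ + Sᵀ * (K₀ + D) + (K₀ + D)ᵀ * S + (K₀ + D)ᵀ * U * (K₀ + D)) * C).trace
      = ((Λ + Sᵀ * K₀ + K₀ᵀ * S + K₀ᵀ * U * K₀) * C).trace + (Dᵀ * U * D * C).trace := by
  have h3 : Dᵀ * U * K₀ = -(Dᵀ * S) := by rw [Matrix.mul_assoc, h2, Matrix.mul_neg]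
  simp only [Matrix.transpose_add, Matrix.add_mul, Matrix.mul_add, h1, h3,
    Matrix.neg_mul, Matrix.mul_neg, Matrix.trace_add, Matrix.trace_neg]
  ring

lemma phi_combo {p d : ℕ} (U : Matrix (Fin p) (Fin p) ℝ) (S : Matrix (Fin p) (Fin d) ℝ)
    (Λ C : Matrix (Fin d) (Fin d) ℝ) (a b : ℝ) (hab : a + b = 1)
    (K₁ K₂ : Matrix (Fin p) (Fin d) ℝ) :
    ((Λ + Sᵀ * (a • K₁ + b • K₂) + (a • K₁ + b • K₂)ᵀ * S
        + (a • K₁ + b • K₂)ᵀ * U * (a • K₁ + b • K₂)) * C).trace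
      = a * ((Λ + Sᵀ * K₁ + K₁ᵀ * S + K₁ᵀ * U * K₁) * C).trace
        + b * ((Λ + Sᵀ * K₂ + K₂ᵀ * S + K₂ᵀ * U * K₂) * C).trace
        - a * b * ((K₁ - K₂)ᵀ * U * (K₁ - K₂) * C).trace := by
  have hb : b = 1 - a := by linarith
  subst hb
  simp only [Matrix.transpose_add, Matrix.transpose_smul, Matrix.transpose_sub,
    Matrix.add_mul, Matrix.mul_add, Matrix.sub_mul, Matrix.mul_sub,
    smul_mul_assoc, mul_smul_comm, Matrix.mul_smul, Matrix.smul_mul, Matrix.trace_add, Matrix.trace_sub, Matrix.trace_smul,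
    smul_smul, smul_eq_mul]
  ring

lemma logdet_concave {p : ℕ} {A B : Matrix (Fin p) (Fin p) ℝ} (hA : A.PosDef) (hB : B.PosDef)
    {a b : ℝ} (ha : 0 ≤ a) (hb : 0 ≤ b) (hab : a + b = 1) (hC : (a • A + b • B).PosDef) :
    a * Real.log A.det + b * Real.log B.det ≤ Real.log (a • A + b • B).det := by
  rcases eq_or_lt_of_le ha with ha0 | ha0
  · have hb1 : b = 1 := by linarith
    simp [← ha0, hb1]
  rcases eq_or_lt_of_le hb with hb0 | hb0
  · have ha1 : a = 1 := by linarith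
    simp [← hb0, ha1]
  set C := a • A + b • B with hCdef
  have hCu : IsUnit C.det := isUnit_iff_ne_zero.mpr hC.det_pos.ne'
  obtain ⟨h1, -⟩ := logdet_tangent hA hC
  obtain ⟨h2, -⟩ := logdet_tangent hB hC
  have ht : a * (C⁻¹ * A).trace + b * (C⁻¹ * B).trace = (Fintype.card (Fin p) : ℝ) := by
    have expand : a * (C⁻¹ * A).trace + b * (C⁻¹ * B).trace = (C⁻¹ * C).trace := by
      rw [hCdef, Matrix.mul_add, Matrix.mul_smul, Matrix.mul_smul, Matrix.trace_add,
        Matrix.trace_smul, Matrix.trace_smul]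
      simp
    rw [expand, Matrix.nonsing_inv_mul _ hCu, Matrix.trace_one]
  have e1 : a * Real.log A.det ≤ a * Real.log C.det + a * (C⁻¹ * A).trace
      - a * (Fintype.card (Fin p) : ℝ) := by nlinarith
  have e2 : b * Real.log B.det ≤ b * Real.log C.det + b * (C⁻¹ * B).trace
      - b * (Fintype.card (Fin p) : ℝ) := by nlinarith
  have hsC : a * Real.log C.det + b * Real.log C.det = Real.log C.det := by
    rw [← add_mul, hab, one_mul]
  have hsp : a * (Fintype.card (Fin p) : ℝ) + b * (Fintype.card (Fin p) : ℝ)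
      = (Fintype.card (Fin p) : ℝ) := by rw [← add_mul, hab, one_mul]
  linarith

lemma combo_posDef {p : ℕ} {A B : Matrix (Fin p) (Fin p) ℝ} (hA : A.PosDef) (hB : B.PosDef)
    {a b : ℝ} (ha : 0 ≤ a) (hb : 0 ≤ b) (hab : a + b = 1) : (a • A + b • B).PosDef := by
  rcases eq_or_lt_of_le ha with ha0 | ha0
  · have hb1 : b = 1 := by linarith
    simpa [← ha0, hb1] using hB
  rcases eq_or_lt_of_le hb with hb0 | hb0
  · have ha1 : a = 1 := by linarith
    simpa [← hb0, ha1] using hA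
  exact (posDef_smul ha0 hA).add (posDef_smul hb0 hB)

lemma scalar_ineq {a b c g t1 t2 g1 g2 r1 r2 l1 l2 lc w1 w2 : ℝ} (hab : a + b = 1)
    (hg2 : 0 < g / 2) (e4 : a * l1 + b * l2 ≤ lc) (e5 : a * b * r1 ≤ 0) (e6 : a * b * r2 ≤ 0) :
    a * (t1 + g1 + c + g / 2 * l1 + w1) + b * (t2 + g2 + c + g / 2 * l2 + w2)
      ≤ a * t1 + b * t2 - a * b * r1 + (a * g1 + b * g2 - a * b * r2) + c + g / 2 * lc
        + (a * w1 + b * w2) := by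
  have h7 := mul_le_mul_of_nonneg_left e4 (le_of_lt hg2)
  have hc : a * c + b * c = c := by rw [← add_mul, hab, one_mul]
  nlinarith [h7, hc]


/-- The discounted approximated Iq-function of the infinite-horizon LQ mean-field control
problem, as a function of the Gaussian policy parameters `(K, K̄, Σ)`. -/
noncomputable def iqFun {p d : ℕ} (γ : ℝ)
    (U V : Matrix (Fin p) (Fin p) ℝ) (S Z : Matrix (Fin p) (Fin d) ℝ)
    (Λ Γ : Matrix (Fin d) (Fin d) ℝ) (C₁ C₂ : Matrix (Fin d) (Fin d) ℝ) (χ : ℝ)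
    (x : Matrix (Fin p) (Fin d) ℝ × Matrix (Fin p) (Fin d) ℝ × Matrix (Fin p) (Fin p) ℝ) :
    ℝ :=
  ((Λ + Sᵀ * x.1 + x.1ᵀ * S + x.1ᵀ * U * x.1) * C₁).trace
    + ((Γ + Zᵀ * x.2.1 + x.2.1ᵀ * Z + x.2.1ᵀ * V * x.2.1) * C₂).trace
    + χ + γ / 2 * Real.log x.2.2.det + (U * x.2.2).trace

/-- With `γ > 0`, `U, V` real symmetric negative definite, `Λ, Γ` symmetric,
`C₁, C₂` symmetric positive definite and `χ ∈ ℝ`, the function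
`f(K, K̄, Σ) = Tr((Λ + SᵀK + KᵀS + KᵀUK)C₁) + Tr((Γ + ZᵀK̄ + K̄ᵀZ + K̄ᵀVK̄)C₂) + χ
 + (γ/2) log det Σ + Tr(UΣ)` is concave on its convex domain
`{(K, K̄, Σ) : Σ symmetric positive definite}`, and
`(K*, K̄*, Σ*) = (-U⁻¹S, -V⁻¹Z, -(γ/2)U⁻¹)` is its unique global maximizer. -/
theorem stmt9 {p d : ℕ} (γ : ℝ) (hγ : 0 < γ)
    (U V : Matrix (Fin p) (Fin p) ℝ) (hU : (-U).PosDef) (hV : (-V).PosDef)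
    (S Z : Matrix (Fin p) (Fin d) ℝ)
    (Λ Γ : Matrix (Fin d) (Fin d) ℝ) (hΛ : Λ.IsSymm) (hΓ : Γ.IsSymm)
    (C₁ C₂ : Matrix (Fin d) (Fin d) ℝ) (hC₁ : C₁.PosDef) (hC₂ : C₂.PosDef)
    (χ : ℝ) :
    ConcaveOn ℝ {x : Matrix (Fin p) (Fin d) ℝ × Matrix (Fin p) (Fin d) ℝ ×
        Matrix (Fin p) (Fin p) ℝ | x.2.2.PosDef}
      (iqFun γ U V S Z Λ Γ C₁ C₂ χ) ∧
    ((-(γ / 2)) • U⁻¹).PosDef ∧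
    ∀ K K' : Matrix (Fin p) (Fin d) ℝ, ∀ Sig : Matrix (Fin p) (Fin p) ℝ, Sig.PosDef →
      (iqFun γ U V S Z Λ Γ C₁ C₂ χ (K, K', Sig) ≤
        iqFun γ U V S Z Λ Γ C₁ C₂ χ (-(U⁻¹ * S), -(V⁻¹ * Z), (-(γ / 2)) • U⁻¹) ∧
      (iqFun γ U V S Z Λ Γ C₁ C₂ χ (K, K', Sig) =
        iqFun γ U V S Z Λ Γ C₁ C₂ χ (-(U⁻¹ * S), -(V⁻¹ * Z), (-(γ / 2)) • U⁻¹) ↔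
        (K, K', Sig) = (-(U⁻¹ * S), -(V⁻¹ * Z), (-(γ / 2)) • U⁻¹))) := by
  have hγ2 : (0 : ℝ) < γ / 2 := by linarith
  -- symmetry and invertibility of U, V
  have hUt : Uᵀ = U := by
    have := herm_transpose hU.1
    simpa using this
  have hVt : Vᵀ = V := by
    have := herm_transpose hV.1
    simpa using this
  have hUdet : IsUnit U.det := by
    have : IsUnit U := by simpa using hU.isUnit.neg
    exact (Matrix.isUnit_iff_isUnit_det U).mp this
  have hVdet : IsUnit V.det := by
    have : IsUnit V := by simpa using hV.isUnit.neg
    exact (Matrix.isUnit_iff_isUnit_det V).mp this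
  -- the optimal points
  set K₀ : Matrix (Fin p) (Fin d) ℝ := -(U⁻¹ * S) with hK₀def
  set L₀ : Matrix (Fin p) (Fin d) ℝ := -(V⁻¹ * Z) with hL₀def
  set Sgs : Matrix (Fin p) (Fin p) ℝ := (-(γ / 2)) • U⁻¹ with hSgsdef
  have hUinvneg : (-U)⁻¹ = -(U⁻¹) := by
    apply Matrix.inv_eq_right_inv
    rw [Matrix.neg_mul, Matrix.mul_neg, neg_neg, Matrix.mul_nonsing_inv _ hUdet]
  have hSgsPD : Sgs.PosDef := by
    have h1 : Sgs = (γ / 2) • (-U)⁻¹ := by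
      rw [hSgsdef, hUinvneg, smul_neg, ← neg_smul]
    rw [h1]
    exact posDef_smul hγ2 hU.inv
  have hK1 : K₀ᵀ * U = -Sᵀ := by
    rw [hK₀def, Matrix.transpose_neg, Matrix.transpose_mul, Matrix.transpose_nonsing_inv, hUt,
      Matrix.neg_mul, Matrix.mul_assoc, Matrix.nonsing_inv_mul _ hUdet, Matrix.mul_one]
  have hK2 : U * K₀ = -S := by
    rw [hK₀def, Matrix.mul_neg, ← Matrix.mul_assoc, Matrix.mul_nonsing_inv _ hUdet,
      Matrix.one_mul]
  have hL1 : L₀ᵀ * V = -Zᵀ := by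
    rw [hL₀def, Matrix.transpose_neg, Matrix.transpose_mul, Matrix.transpose_nonsing_inv, hVt,
      Matrix.neg_mul, Matrix.mul_assoc, Matrix.nonsing_inv_mul _ hVdet, Matrix.mul_one]
  have hL2 : V * L₀ = -Z := by
    rw [hL₀def, Matrix.mul_neg, ← Matrix.mul_assoc, Matrix.mul_nonsing_inv _ hVdet,
      Matrix.one_mul]
  have hSgsinv : Sgs⁻¹ = (-(2 / γ)) • U := by
    apply Matrix.inv_eq_right_inv
    rw [hSgsdef, Matrix.smul_mul, Matrix.mul_smul, smul_smul, Matrix.nonsing_inv_mul _ hUdet]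
    have : -(γ / 2) * -(2 / γ) = 1 := by field_simp
    rw [this, one_smul]
  have htrUSgs : (U * Sgs).trace = -(γ / 2) * (Fintype.card (Fin p) : ℝ) := by
    rw [hSgsdef, Matrix.mul_smul, Matrix.trace_smul, Matrix.mul_nonsing_inv _ hUdet,
      Matrix.trace_one]
    simp
  -- quadratic defect terms
  have quadfact₁ : ∀ M : Matrix (Fin p) (Fin d) ℝ,
      (Mᵀ * U * M * C₁).trace ≤ 0 ∧ ((Mᵀ * U * M * C₁).trace = 0 ↔ M = 0) := by
    intro M
    obtain ⟨h1, h2⟩ := trace_quad_pos hU hC₁ M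
    have hrw : Mᵀ * (-U) * M * C₁ = -(Mᵀ * U * M * C₁) := by
      simp [Matrix.mul_neg, Matrix.neg_mul]
    rw [hrw, Matrix.trace_neg] at h1 h2
    constructor
    · linarith
    · rw [← h2]
      constructor <;> intro h <;> linarith
  have quadfact₂ : ∀ M : Matrix (Fin p) (Fin d) ℝ,
      (Mᵀ * V * M * C₂).trace ≤ 0 ∧ ((Mᵀ * V * M * C₂).trace = 0 ↔ M = 0) := by
    intro M
    obtain ⟨h1, h2⟩ := trace_quad_pos hV hC₂ M
    have hrw : Mᵀ * (-V) * M * C₂ = -(Mᵀ * V * M * C₂) := by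
      simp [Matrix.mul_neg, Matrix.neg_mul]
    rw [hrw, Matrix.trace_neg] at h1 h2
    constructor
    · linarith
    · rw [← h2]
      constructor <;> intro h <;> linarith
  refine ⟨?_, hSgsPD, ?_⟩
  · -- concavity
    constructor
    · intro x hx y hy a b ha hb hab
      obtain ⟨K₁, K₁', Sg₁⟩ := x
      obtain ⟨K₂, K₂', Sg₂⟩ := y
      exact combo_posDef hx hy ha hb hab
    · intro x hx y hy a b ha hb hab
      obtain ⟨K₁, K₁', Sg₁⟩ := x
      obtain ⟨K₂, K₂', Sg₂⟩ := y
      simp only [Set.mem_setOf_eq] at hx hy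
      have hcombo : (a • Sg₁ + b • Sg₂).PosDef := combo_posDef hx hy ha hb hab
      have hsmul : a • (K₁, K₁', Sg₁) + b • (K₂, K₂', Sg₂)
          = (a • K₁ + b • K₂, a • K₁' + b • K₂', a • Sg₁ + b • Sg₂) := rfl
      rw [hsmul]
      simp only [iqFun, smul_eq_mul]
      have e1 := phi_combo U S Λ C₁ a b hab K₁ K₂
      have e2 := phi_combo V Z Γ C₂ a b hab K₁' K₂'
      have e3 : (U * (a • Sg₁ + b • Sg₂)).trace = a * (U * Sg₁).trace + b * (U * Sg₂).trace := by
        rw [Matrix.mul_add, Matrix.mul_smul, Matrix.mul_smul, Matrix.trace_add,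
          Matrix.trace_smul, Matrix.trace_smul]
        simp
      have e4 := logdet_concave hx hy ha hb hab hcombo
      have e5 : a * b * ((K₁ - K₂)ᵀ * U * (K₁ - K₂) * C₁).trace ≤ 0 :=
        mul_nonpos_of_nonneg_of_nonpos (mul_nonneg ha hb) (quadfact₁ (K₁ - K₂)).1
      have e6 : a * b * ((K₁' - K₂')ᵀ * V * (K₁' - K₂') * C₂).trace ≤ 0 :=
        mul_nonpos_of_nonneg_of_nonpos (mul_nonneg ha hb) (quadfact₂ (K₁' - K₂')).1
      rw [e1, e2, e3]
      exact scalar_ineq hab hγ2 e4 e5 e6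
  · -- optimality
    intro K K' Sig hSig
    obtain ⟨htan, htaneq⟩ := logdet_tangent hSig hSgsPD
    set E : ℝ := Real.log Sig.det - Real.log Sgs.det - (Sgs⁻¹ * Sig).trace
      + (Fintype.card (Fin p) : ℝ) with hEdef
    have hE : E ≤ 0 := by rw [hEdef]; linarith
    have hEeq : E = 0 ↔ Sig = Sgs := by
      rw [← htaneq, hEdef]
      constructor <;> intro h <;> linarith
    have htrinv : (Sgs⁻¹ * Sig).trace = -(2 / γ) * (U * Sig).trace := by
      rw [hSgsinv, Matrix.smul_mul, Matrix.trace_smul, smul_eq_mul]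
    set q₁ : ℝ := ((K - K₀)ᵀ * U * (K - K₀) * C₁).trace with hq₁def
    set q₂ : ℝ := ((K' - L₀)ᵀ * V * (K' - L₀) * C₂).trace with hq₂def
    have master : iqFun γ U V S Z Λ Γ C₁ C₂ χ (K, K', Sig)
        = iqFun γ U V S Z Λ Γ C₁ C₂ χ (K₀, L₀, Sgs) + q₁ + q₂ + γ / 2 * E := by
      have A1 := phi_expand U S Λ C₁ K₀ (K - K₀) hK1 hK2
      have A2 := phi_expand V Z Γ C₂ L₀ (K' - L₀) hL1 hL2
      rw [show K₀ + (K - K₀) = K from by abel] at A1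
      rw [show L₀ + (K' - L₀) = K' from by abel] at A2
      simp only [iqFun]
      rw [A1, A2, hEdef, htrinv, htrUSgs, ← hq₁def, ← hq₂def]
      have hcancel : γ / 2 * (2 / γ) = 1 := by field_simp
      linear_combination (-(U * Sig).trace) * hcancel
    obtain ⟨hq₁le, hq₁eq⟩ := quadfact₁ (K - K₀)
    obtain ⟨hq₂le, hq₂eq⟩ := quadfact₂ (K' - L₀)
    rw [← hq₁def] at hq₁le hq₁eq
    rw [← hq₂def] at hq₂le hq₂eq
    have hγE : γ / 2 * E ≤ 0 := mul_nonpos_of_nonneg_of_nonpos (le_of_lt hγ2) hE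
    constructor
    · rw [master]; linarith
    · constructor
      · intro h
        rw [master] at h
        have h1 : q₁ = 0 := by linarith
        have h2 : q₂ = 0 := by linarith
        have h3 : γ / 2 * E = 0 := by linarith
        have hE0 : E = 0 := by
          rcases mul_eq_zero.mp h3 with h | h
          · linarith
          · exact h
        have hKeq : K = K₀ := by
          have := hq₁eq.mp h1
          rwa [sub_eq_zero] at this
        have hK'eq : K' = L₀ := by
          have := hq₂eq.mp h2
          rwa [sub_eq_zero] at this
        have hSeq : Sig = Sgs := hEeq.mp hE0
        rw [hKeq, hK'eq, hSeq]
      · intro h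
        rw [Prod.mk.injEq, Prod.mk.injEq] at h
        obtain ⟨h1, h2, h3⟩ := h
        rw [master]
        have hq10 : q₁ = 0 := hq₁eq.mpr (sub_eq_zero_of_eq (h1.trans hK₀def.symm))
        have hq20 : q₂ = 0 := hq₂eq.mpr (sub_eq_zero_of_eq (h2.trans hL₀def.symm))
        have hE0 : E = 0 := hEeq.mpr (h3.trans hSgsdef.symm)
        rw [hq10, hq20, hE0]
        ring
end
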